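/- Let n ≥ 7 and let t be an integer with 2 ≤ t ≤ ⌊(n−1)/2⌋ − 1, and set M := n − t − 2. Let p be a prime dividing t, let F = GF(p) and V = F^M with standard basis e_1,…,e_M and c := e_1 + ⋯ + e_M. Define the subspaces A_i := span{e_i} for 1 ≤ i ≤ M, B_i := span{c − e_i} for 1 ≤ i ≤ t+1, and C := span{c}. Then inequality (b) fails for these subspaces; in fact M·H(C) = M while the right-hand side of the M-scaled inequality equals M − 1. -/

import Mathlib

open Finset

variable {F V : Type*} [Field F] [AddCommGroup V] [Module F V]

/-- `eH X` is the dimension of the subspace `X`, as an integer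
(the "entropy" `H(X)` of the paper). -/
noncomputable def eH (X : Submodule F V) : ℤ := Module.finrank F X

/-- Left-hand side of inequality (a):
`H(B_1,…,B_{t+1},A_{t+2},…,A_M) + (t+2)(M−t−1)·H(C)`. -/
noncomputable def lhsA (t M : ℕ) (A B : ℕ → Submodule F V) (C : Submodule F V) : ℤ :=
  eH ((∑ i ∈ Icc 1 (t+1), B i) + ∑ i ∈ Icc (t+2) M, A i)
    + ((t : ℤ) + 2) * ((M : ℤ) - t - 1) * eH C

/-- Right-hand side of inequality (a):
`(M−1)·I(A_1+⋯+A_M ; C) + (t+2)·Σ_{i=t+2}^{M} H(A_i)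
 + ((t+2)(M−t)−1)·( H(C | A_1,…,A_M) + Σ_{i=1}^{M} I(Σ_{j≠i} A_j ; C) )
 + Σ_{i=1}^{t+1} ( H(B_i | A_j : j≠i) + H(B_i | A_i, C)
      + I(A_1+⋯+A_i ; A_{i+1}+⋯+A_{t+1}) + I(A_1+⋯+A_{i−1} ; A_i) )`. -/
noncomputable def rhsA (t M : ℕ) (A B : ℕ → Submodule F V) (C : Submodule F V) : ℤ :=
  ((M : ℤ) - 1) * eH ((∑ i ∈ Icc 1 M, A i) ⊓ C)
  + ((t : ℤ) + 2) * ∑ i ∈ Icc (t+2) M, eH (A i)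
  + (((t : ℤ) + 2) * ((M : ℤ) - t) - 1) *
      ((eH (C + ∑ i ∈ Icc 1 M, A i) - eH (∑ i ∈ Icc 1 M, A i))
        + ∑ i ∈ Icc 1 M, eH ((∑ j ∈ (Icc 1 M).erase i, A j) ⊓ C))
  + ∑ i ∈ Icc 1 (t+1),
      ((eH (B i + ∑ j ∈ (Icc 1 M).erase i, A j) - eH (∑ j ∈ (Icc 1 M).erase i, A j))
        + (eH (B i + (A i + C)) - eH (A i + C))
        + eH ((∑ j ∈ Icc 1 i, A j) ⊓ (∑ j ∈ Icc (i+1) (t+1), A j))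
        + eH ((∑ j ∈ Icc 1 (i-1), A j) ⊓ A i))

/-- Inequality (a) of the paper. -/
def IneqA (t M : ℕ) (A B : ℕ → Submodule F V) (C : Submodule F V) : Prop :=
  lhsA t M A B C ≤ rhsA t M A B C

/-- Left-hand side of inequality (b): `M·H(C)`. -/
noncomputable def lhsB (t M : ℕ) (A B : ℕ → Submodule F V) (C : Submodule F V) : ℤ :=
  (M : ℤ) * eH C

/-- Right-hand side of the `M`-scaled inequality (b):
`H(B_1,…,B_{t+1},A_{t+2},…,A_M)
 + M·( H(C | A_1,…,A_M) + Σ_{i=1}^{M} I(Σ_{j≠i} A_j ; C)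
    + Σ_{i=2}^{t+1} I(A_1+⋯+A_{i−1} ; A_i)
    + Σ_{i=1}^{t+1} ( H(C | A_i, B_i) + H(B_i | A_j : j≠i)
        + I(A_1+⋯+A_i ; A_{i+1}+⋯+A_M) ) )`. -/
noncomputable def rhsB (t M : ℕ) (A B : ℕ → Submodule F V) (C : Submodule F V) : ℤ :=
  eH ((∑ i ∈ Icc 1 (t+1), B i) + ∑ i ∈ Icc (t+2) M, A i)
  + (M : ℤ) *
      ((eH (C + ∑ i ∈ Icc 1 M, A i) - eH (∑ i ∈ Icc 1 M, A i))
        + ∑ i ∈ Icc 1 M, eH ((∑ j ∈ (Icc 1 M).erase i, A j) ⊓ C)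
        + ∑ i ∈ Icc 2 (t+1), eH ((∑ j ∈ Icc 1 (i-1), A j) ⊓ A i)
        + ∑ i ∈ Icc 1 (t+1),
            ((eH (C + (A i + B i)) - eH (A i + B i))
              + (eH (B i + ∑ j ∈ (Icc 1 M).erase i, A j) - eH (∑ j ∈ (Icc 1 M).erase i, A j))
              + eH ((∑ j ∈ Icc 1 i, A j) ⊓ (∑ j ∈ Icc (i+1) M, A j))))

/-- Inequality (b) of the paper (in `M`-scaled form). -/
def IneqB (t M : ℕ) (A B : ℕ → Submodule F V) (C : Submodule F V) : Prop :=
  lhsB t M A B C ≤ rhsB t M A B C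

section Aux

open Finset Submodule

variable {K W : Type*} [Field K] [AddCommGroup W] [Module K W]

lemma sum_span_singleton (f : ℕ → W) (S : Finset ℕ) :
    ∑ i ∈ S, Submodule.span K {f i} = Submodule.span K (f '' ↑S) := by
  classical
  induction S using Finset.induction with
  | empty => simp
  | insert _ _ h ih =>
      rw [Finset.sum_insert h, ih, Finset.coe_insert, Set.image_insert_eq,
        Submodule.span_insert, Submodule.add_eq_sup]

end Aux

/-- Counterexample to inequality (b) in characteristic `p ∣ t`: for the
subspaces `A_i = ⟨e_i⟩`, `B_i = ⟨c − e_i⟩`, `C = ⟨c⟩` of `GF(p)^M`, the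
left-hand side `M·H(C)` equals `M` while the right-hand side of the
`M`-scaled inequality (b) equals `M − 1`. -/
theorem ineqB_fails_of_char_dvd (n t M : ℕ) (hn : 7 ≤ n) (ht2 : 2 ≤ t)
    (ht : t ≤ (n - 1) / 2 - 1) (hM : M = n - t - 2)
    (p : ℕ) [Fact p.Prime] (hpt : p ∣ t)
    (e : ℕ → (Fin M → ZMod p)) (he : ∀ i j, e i j = if (j : ℕ) + 1 = i then 1 else 0)
    (c : Fin M → ZMod p) (hc : c = fun _ => 1)
    (A B : ℕ → Submodule (ZMod p) (Fin M → ZMod p)) (C : Submodule (ZMod p) (Fin M → ZMod p))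
    (hA : ∀ i, A i = Submodule.span (ZMod p) {e i})
    (hB : ∀ i, B i = Submodule.span (ZMod p) {c - e i})
    (hC : C = Submodule.span (ZMod p) {c}) :
    lhsB t M A B C = (M : ℤ) ∧ rhsB t M A B C = (M : ℤ) - 1 := by
  classical
  -- arithmetic facts
  have hdiv : t + 1 ≤ (n - 1) / 2 := by omega
  have h2 : (t + 1) * 2 ≤ n - 1 := (Nat.le_div_iff_mul_le two_pos).mp hdiv
  have hMt : t + 1 ≤ M := by omega
  have hM0 : 0 < M := by omega
  have htp : (t : ZMod p) = 0 := by rw [ZMod.natCast_eq_zero_iff]; exact hpt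
  -- basic vector facts
  have hesum : ∀ (S : Finset ℕ) (k : Fin M),
      (∑ j ∈ S, e j) k = if (k : ℕ) + 1 ∈ S then 1 else 0 := by
    intro S k
    rw [Finset.sum_apply]
    simp only [he]
    exact Finset.sum_ite_eq S ((k : ℕ) + 1) (fun _ => 1)
  have hc0 : c ≠ 0 := by
    intro h
    have := congrFun h ⟨0, hM0⟩
    rw [hc] at this
    exact one_ne_zero this
  have he0 : ∀ i, 1 ≤ i → i ≤ M → e i ≠ 0 := by
    intro i h1 h2i h
    have := congrFun h ⟨i - 1, by omega⟩
    rw [he] at this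
    simp only [Pi.zero_apply] at this
    rw [if_pos (by omega)] at this
    exact one_ne_zero this
  have hAspan : ∀ S : Finset ℕ, ∑ i ∈ S, A i = Submodule.span (ZMod p) (e '' ↑S) := by
    intro S
    rw [Finset.sum_congr rfl (fun i _ => hA i), sum_span_singleton]
  have hBspan : ∀ S : Finset ℕ,
      ∑ i ∈ S, B i = Submodule.span (ZMod p) ((fun i => c - e i) '' ↑S) := by
    intro S
    rw [Finset.sum_congr rfl (fun i _ => hB i), sum_span_singleton]
  -- vanishing of coordinates for elements of coordinate spans
  have hkey : ∀ (S : Finset ℕ) (x : Fin M → ZMod p),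
      x ∈ Submodule.span (ZMod p) (e '' ↑S) → ∀ k : Fin M, (k : ℕ) + 1 ∉ S → x k = 0 := by
    intro S x hx k hk
    induction hx using Submodule.span_induction with
    | mem y hy =>
        obtain ⟨j, hj, rfl⟩ := hy
        rw [he, if_neg]
        rintro rfl
        exact hk hj
    | zero => rfl
    | add a b _ _ ha hb => simp [ha, hb]
    | smul r a _ ha => simp [ha]
  have hnotmem : ∀ (S : Finset ℕ) (i : ℕ), 1 ≤ i → i ≤ M → i ∉ S →
      e i ∉ Submodule.span (ZMod p) (e '' ↑S) := by
    intro S i h1 h2i hiS hmem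
    have := hkey S _ hmem ⟨i - 1, by omega⟩ (by simpa using by rw [show i - 1 + 1 = i by omega]; exact hiS)
    rw [he, if_pos (by simp; omega)] at this
    exact one_ne_zero this
  have hcnot : ∀ (S : Finset ℕ) (i : ℕ), 1 ≤ i → i ≤ M → i ∉ S →
      c ∉ Submodule.span (ZMod p) (e '' ↑S) := by
    intro S i h1 h2i hiS hmem
    have := hkey S _ hmem ⟨i - 1, by omega⟩ (by simpa using by rw [show i - 1 + 1 = i by omega]; exact hiS)
    rw [hc] at this
    exact one_ne_zero this
  -- the sum of all A's is everything
  have htop : ∑ i ∈ Icc 1 M, A i = ⊤ := by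
    rw [hAspan]
    rw [eq_top_iff]
    intro x _
    rw [pi_eq_sum_univ x]
    refine Submodule.sum_mem _ (fun k _ => Submodule.smul_mem _ _ (Submodule.subset_span ?_))
    refine ⟨(k : ℕ) + 1, by simp [Finset.mem_Icc], ?_⟩
    funext j
    rw [he]
    by_cases h : j = k
    · subst h; simp
    · have h' : (j : ℕ) ≠ (k : ℕ) := fun hh => h (Fin.ext hh)
      rw [if_neg (by omega), if_neg (fun hh => h' (congrArg Fin.val hh.symm))]
  have hC1 : eH C = 1 := by
    rw [eH, hC, finrank_span_singleton hc0]
    norm_num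
  constructor
  · rw [lhsB, hC1, mul_one]
  -- each of the four inner components of rhsB vanishes
  have hfinV : Module.finrank (ZMod p) (Fin M → ZMod p) = M := by
    rw [Module.finrank_pi, Fintype.card_fin]
  have h2' : eH (C + ∑ i ∈ Icc 1 M, A i) - eH (∑ i ∈ Icc 1 M, A i) = 0 := by
    rw [htop, Submodule.add_eq_sup, sup_top_eq, sub_self]
  have h3 : ∑ i ∈ Icc 1 M, eH ((∑ j ∈ (Icc 1 M).erase i, A j) ⊓ C) = 0 := by
    refine Finset.sum_eq_zero (fun i hi => ?_)
    rw [Finset.mem_Icc] at hi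
    rw [hAspan, hC]
    have hdisj : Disjoint (Submodule.span (ZMod p) (e '' ↑((Icc 1 M).erase i)))
        (Submodule.span (ZMod p) {c}) :=
      (Submodule.disjoint_span_singleton' hc0).mpr
        (hcnot _ i hi.1 hi.2 (Finset.notMem_erase i _))
    rw [disjoint_iff.mp hdisj, eH, finrank_bot]
    norm_num
  have h4 : ∑ i ∈ Icc 2 (t+1), eH ((∑ j ∈ Icc 1 (i-1), A j) ⊓ A i) = 0 := by
    refine Finset.sum_eq_zero (fun i hi => ?_)
    rw [Finset.mem_Icc] at hi
    rw [hAspan, hA]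
    have hdisj : Disjoint (Submodule.span (ZMod p) (e '' ↑(Icc 1 (i-1))))
        (Submodule.span (ZMod p) {e i}) :=
      (Submodule.disjoint_span_singleton' (he0 i (by omega) (by omega))).mpr
        (hnotmem _ i (by omega) (by omega) (by simp [Finset.mem_Icc]; omega))
    rw [disjoint_iff.mp hdisj, eH, finrank_bot]
    norm_num
  have h5 : ∑ i ∈ Icc 1 (t+1),
      ((eH (C + (A i + B i)) - eH (A i + B i))
        + (eH (B i + ∑ j ∈ (Icc 1 M).erase i, A j) - eH (∑ j ∈ (Icc 1 M).erase i, A j))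
        + eH ((∑ j ∈ Icc 1 i, A j) ⊓ (∑ j ∈ Icc (i+1) M, A j))) = 0 := by
    refine Finset.sum_eq_zero (fun i hi => ?_)
    rw [Finset.mem_Icc] at hi
    have h5a : eH (C + (A i + B i)) - eH (A i + B i) = 0 := by
      have hle : C ≤ A i + B i := by
        rw [hC, Submodule.span_le, Set.singleton_subset_iff, hA, hB, Submodule.add_eq_sup]
        have hm : e i + (c - e i) ∈ Submodule.span (ZMod p) {e i}
            ⊔ Submodule.span (ZMod p) {c - e i} :=
          Submodule.add_mem _
            (Submodule.mem_sup_left (Submodule.mem_span_singleton_self _))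
            (Submodule.mem_sup_right (Submodule.mem_span_singleton_self _))
        rwa [show e i + (c - e i) = c by abel] at hm
      rw [Submodule.add_eq_sup, sup_eq_right.mpr hle, sub_self]
    have h5b : eH (B i + ∑ j ∈ (Icc 1 M).erase i, A j)
        - eH (∑ j ∈ (Icc 1 M).erase i, A j) = 0 := by
      have hle : B i ≤ ∑ j ∈ (Icc 1 M).erase i, A j := by
        rw [hB, hAspan, Submodule.span_le, Set.singleton_subset_iff]
        have hceq : c - e i = ∑ j ∈ (Icc 1 M).erase i, e j := by
          funext k
          rw [Pi.sub_apply, hesum, hc, he]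
          by_cases h : (k : ℕ) + 1 = i
          · rw [if_pos h, if_neg (by simp [Finset.mem_erase]; omega), sub_self]
          · rw [if_neg h, if_pos (by simp [Finset.mem_erase, Finset.mem_Icc]; omega), sub_zero]
        rw [hceq]
        exact Submodule.sum_mem _ (fun j hj => Submodule.subset_span ⟨j, hj, rfl⟩)
      rw [Submodule.add_eq_sup, sup_eq_right.mpr hle, sub_self]
    have h5c : eH ((∑ j ∈ Icc 1 i, A j) ⊓ (∑ j ∈ Icc (i+1) M, A j)) = 0 := by
      have hbot : (∑ j ∈ Icc 1 i, A j) ⊓ (∑ j ∈ Icc (i+1) M, A j) = ⊥ := by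
        rw [hAspan, hAspan, eq_bot_iff]
        intro x hx
        rw [Submodule.mem_inf] at hx
        have : x = 0 := by
          funext k
          by_cases h : (k : ℕ) + 1 ≤ i
          · exact hkey _ x hx.2 k (by simp [Finset.mem_Icc]; omega)
          · exact hkey _ x hx.1 k (by simp [Finset.mem_Icc]; omega)
        simp [this]
      rw [hbot, eH, finrank_bot]
      norm_num
    rw [h5a, h5b, h5c]
    ring
  -- the main term
  have h1 : eH ((∑ i ∈ Icc 1 (t+1), B i) + ∑ i ∈ Icc (t+2) M, A i) = (M : ℤ) - 1 := by
    rw [hBspan, hAspan, Submodule.add_eq_sup, ← Submodule.span_union]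
    set X' : Set (Fin M → ZMod p) := (fun i => c - e i) '' ↑(Icc 2 (t+1)) with hX'
    set Y : Set (Fin M → ZMod p) := e '' ↑(Icc (t+2) M) with hY
    have hsplit : ((fun i => c - e i) '' ↑(Icc 1 (t+1)) : Set (Fin M → ZMod p)) ∪ Y
        = insert (c - e 1) (X' ∪ Y) := by
      have : Icc 1 (t+1) = insert 1 (Icc 2 (t+1)) := by
        ext j; simp [Finset.mem_Icc, Finset.mem_insert]; omega
      rw [this, Finset.coe_insert, Set.image_insert_eq, Set.insert_union]
    have hmem1 : c - e 1 ∈ Submodule.span (ZMod p) (X' ∪ Y) := by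
      have hveq : c - e 1 = (-1 : ZMod p) • (∑ j ∈ Icc 2 (t+1), (c - e j))
          + ∑ j ∈ Icc (t+2) M, e j := by
        funext k
        have hs1 : (∑ j ∈ Icc 2 (t+1), (c - e j)) k
            = - (if (k : ℕ) + 1 ∈ Icc 2 (t+1) then 1 else 0) := by
          rw [Finset.sum_apply]
          have : ∀ j ∈ Icc 2 (t+1), (c - e j) k = c k - e j k := fun _ _ => rfl
          rw [Finset.sum_congr rfl this, Finset.sum_sub_distrib]
          have hck : ∑ j ∈ Icc 2 (t+1), c k = (t : ZMod p) := by
            rw [Finset.sum_const, hc, Nat.card_Icc]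
            simp [show t + 1 + 1 - 2 = t by omega]
          rw [hck, htp]
          have : ∑ j ∈ Icc 2 (t+1), e j k = if (k : ℕ) + 1 ∈ Icc 2 (t+1) then 1 else 0 := by
            rw [← Finset.sum_apply]
            exact hesum _ k
          rw [this, zero_sub]
        rw [Pi.add_apply, Pi.smul_apply, hs1, hesum, Pi.sub_apply, hc, he]
        have hk := k.isLt
        by_cases hk1 : (k : ℕ) + 1 = 1
        · rw [if_pos hk1, if_neg (by simp [Finset.mem_Icc]; omega),
            if_neg (by simp [Finset.mem_Icc]; omega)]
          simp
        · rw [if_neg hk1]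
          by_cases hk2 : (k : ℕ) + 1 ≤ t + 1
          · rw [if_pos (by simp [Finset.mem_Icc]; omega),
              if_neg (by simp [Finset.mem_Icc]; omega)]
            simp
          · rw [if_neg (by simp [Finset.mem_Icc]; omega),
              if_pos (by simp [Finset.mem_Icc]; omega)]
            simp
      rw [hveq]
      refine Submodule.add_mem _ (Submodule.smul_mem _ _ (Submodule.sum_mem _ (fun j hj => ?_)))
        (Submodule.sum_mem _ (fun j hj => ?_))
      · exact Submodule.subset_span (Or.inl ⟨j, hj, rfl⟩)
      · exact Submodule.subset_span (Or.inr ⟨j, hj, rfl⟩)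
    have hspan_eq : Submodule.span (ZMod p)
          (((fun i => c - e i) '' ↑(Icc 1 (t+1)) : Set (Fin M → ZMod p)) ∪ Y)
        = Submodule.span (ZMod p) (X' ∪ Y) := by
      rw [hsplit, Submodule.span_insert_eq_span hmem1]
    rw [hspan_eq]
    -- upper bound
    have hub : Module.finrank (ZMod p) (Submodule.span (ZMod p) (X' ∪ Y)) ≤ M - 1 := by
      have hfin : X' ∪ Y = (((Icc 2 (t+1)).image (fun i => c - e i))
          ∪ (Icc (t+2) M).image e : Finset (Fin M → ZMod p)) := by
        rw [Finset.coe_union, Finset.coe_image, Finset.coe_image]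
      rw [hfin]
      refine (finrank_span_finset_le_card _).trans ?_
      refine (Finset.card_union_le _ _).trans ?_
      have c1 := Finset.card_image_le (s := Icc 2 (t+1)) (f := fun i => c - e i)
      have c2 := Finset.card_image_le (s := Icc (t+2) M) (f := e)
      rw [Nat.card_Icc] at c1 c2
      omega
    -- lower bound
    have hlb : M - 1 ≤ Module.finrank (ZMod p) (Submodule.span (ZMod p) (X' ∪ Y)) := by
      have hsup : Submodule.span (ZMod p) (X' ∪ Y) ⊔ A 1 = ⊤ := by
        rw [eq_top_iff, ← htop, hAspan, Submodule.span_le]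
        rintro x ⟨j, hj, rfl⟩
        rw [Finset.mem_coe, Finset.mem_Icc] at hj
        by_cases hj1 : j = 1
        · subst hj1
          exact Submodule.mem_sup_right (hA 1 ▸ Submodule.mem_span_singleton_self _)
        by_cases hj2 : j ≤ t + 1
        · have : e j = e 1 + ((c - e 1) - (c - e j)) := by abel
          rw [this]
          refine Submodule.add_mem _
            (Submodule.mem_sup_right (hA 1 ▸ Submodule.mem_span_singleton_self _))
            (Submodule.mem_sup_left (Submodule.sub_mem _ ?_ ?_))
          · exact hmem1
          · exact Submodule.subset_span (Or.inl ⟨j, by simp [Finset.mem_Icc]; omega, rfl⟩)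
        · exact Submodule.mem_sup_left
            (Submodule.subset_span (Or.inr ⟨j, by simp [Finset.mem_Icc]; omega, rfl⟩))
      have hA1 : Module.finrank (ZMod p) (A 1) = 1 := by
        rw [hA, finrank_span_singleton (he0 1 le_rfl (by omega))]
      have := Submodule.finrank_add_le_finrank_add_finrank
        (Submodule.span (ZMod p) (X' ∪ Y)) (A 1)
      rw [hsup, finrank_top, hfinV, hA1] at this
      omega
    rw [eH]
    have : Module.finrank (ZMod p) (Submodule.span (ZMod p) (X' ∪ Y)) = M - 1 :=
      le_antisymm hub hlb
    rw [this]
    omega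
  rw [rhsB, h1, h2', h3, h4, h5]
  ring
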